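/- Correctness of the exclusion strategy for capability-set equivalence (Proposition 1). Let Cap be a type with decidable equality and let Y : Finset Cap be nonempty. Consider the NFA over the alphabet Finset Cap whose state type is Option {y // y ∈ Y}, whose set of start states is {none}, all of whose states are accepting, and whose transition relation on reading a letter a : Finset Cap is: from none to none whenever no element of Y belongs to a; from none to some y (for each y ∈ Y) whenever y ∉ a; and from some y to some y whenever y ∉ a. Then for every word w : List (Finset Cap), this NFA accepts w if and only if ¬ (↑Y ⊆ ↑(CSet w)), i.e. if and only if some element of Y occurs in no entry of w. -/

import Mathlib

/-- The cumulative capability set of a capability history. -/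
def CSet {Cap : Type*} [DecidableEq Cap] (w : List (Finset Cap)) : Finset Cap :=
  w.foldl (· ∪ ·) ∅

/-- The exclusion NFA for capability-set equivalence. -/
def exclNFA {Cap : Type*} [DecidableEq Cap] (Y : Finset Cap) :
    NFA (Finset Cap) (Option {y // y ∈ Y}) where
  step := fun s a =>
    match s with
    | none => {q | (q = none ∧ ∀ y ∈ Y, y ∉ a) ∨ ∃ y : {y // y ∈ Y}, q = some y ∧ (y : Cap) ∉ a}
    | some y => {q | q = some y ∧ (y : Cap) ∉ a}
  start := {none}
  accept := Set.univ

lemma mem_foldl_union {Cap : Type*} [DecidableEq Cap] (w : List (Finset Cap)) (s : Finset Cap)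
    (x : Cap) : x ∈ w.foldl (· ∪ ·) s ↔ x ∈ s ∨ ∃ a ∈ w, x ∈ a := by
  induction w generalizing s with
  | nil => simp
  | cons b w ih =>
    simp only [List.foldl_cons, ih, Finset.mem_union, List.mem_cons]
    constructor
    · rintro ((h | h) | ⟨a, ha, hx⟩)
      · exact Or.inl h
      · exact Or.inr ⟨b, Or.inl rfl, h⟩
      · exact Or.inr ⟨a, Or.inr ha, hx⟩
    · rintro (h | ⟨a, (rfl | ha), hx⟩)
      · exact Or.inl (Or.inl h)
      · exact Or.inl (Or.inr hx)
      · exact Or.inr ⟨a, ha, hx⟩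

lemma mem_CSet {Cap : Type*} [DecidableEq Cap] (w : List (Finset Cap)) (x : Cap) :
    x ∈ CSet w ↔ ∃ a ∈ w, x ∈ a := by
  simp [CSet, mem_foldl_union]

lemma eval_excl {Cap : Type*} [DecidableEq Cap] (Y : Finset Cap) (w : List (Finset Cap))
    (q : Option {y // y ∈ Y}) :
    q ∈ (exclNFA Y).eval w ↔
      (q = none ∧ ∀ a ∈ w, ∀ y ∈ Y, y ∉ a) ∨
      (∃ y : {y // y ∈ Y}, q = some y ∧ w ≠ [] ∧ ∀ a ∈ w, (y : Cap) ∉ a) := by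
  induction w using List.reverseRecOn generalizing q with
  | nil =>
    simp [NFA.eval, NFA.evalFrom, exclNFA]
  | append_singleton w b ih =>
    have : (exclNFA Y).eval (w ++ [b]) = (exclNFA Y).stepSet ((exclNFA Y).eval w) b :=
      NFA.eval_append_singleton _ _ _
    rw [this, NFA.mem_stepSet]
    constructor
    · rintro ⟨s, hs, hq⟩
      rw [ih] at hs
      rcases hs with ⟨rfl, hall⟩ | ⟨y, rfl, hne, hy⟩
      · -- s = none
        rcases hq with ⟨rfl, hb⟩ | ⟨y, rfl, hyb⟩
        · refine Or.inl ⟨rfl, ?_⟩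
          intro a ha
          rcases List.mem_append.mp ha with ha | ha
          · exact hall a ha
          · simp at ha; subst ha; exact hb
        · refine Or.inr ⟨y, rfl, by simp, ?_⟩
          intro a ha
          rcases List.mem_append.mp ha with ha | ha
          · exact hall a ha y.1 y.2
          · simp at ha; subst ha; exact hyb
      · -- s = some y
        rcases hq with ⟨rfl, hyb⟩
        refine Or.inr ⟨y, rfl, by simp, ?_⟩
        intro a ha
        rcases List.mem_append.mp ha with ha | ha
        · exact hy a ha
        · simp at ha; subst ha; exact hyb
    · rintro (⟨rfl, hall⟩ | ⟨y, rfl, hne, hy⟩)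
      · refine ⟨none, ?_, ?_⟩
        · rw [ih]
          exact Or.inl ⟨rfl, fun a ha => hall a (List.mem_append.mpr (Or.inl ha))⟩
        · exact Or.inl ⟨rfl, fun y hy => hall b (by simp) y hy⟩
      · rcases List.eq_nil_or_concat w with rfl | ⟨u, c, rfl⟩
        · refine ⟨none, ?_, ?_⟩
          · rw [ih]; exact Or.inl ⟨rfl, by simp⟩
          · exact Or.inr ⟨y, rfl, hy b (by simp)⟩
        · refine ⟨some y, ?_, ⟨rfl, hy b (by simp)⟩⟩
          rw [ih]
          exact Or.inr ⟨y, rfl, by simp, fun a ha => hy a (List.mem_append.mpr (Or.inl ha))⟩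

theorem exclNFA_correct {Cap : Type*} [DecidableEq Cap] (Y : Finset Cap) (hY : Y.Nonempty)
    (w : List (Finset Cap)) :
    w ∈ (exclNFA Y).accepts ↔ ¬ ((Y : Set Cap) ⊆ ((CSet w : Finset Cap) : Set Cap)) := by
  have hsub : ¬ ((Y : Set Cap) ⊆ ((CSet w : Finset Cap) : Set Cap)) ↔
      ∃ y ∈ Y, ∀ a ∈ w, y ∉ a := by
    simp only [Set.subset_def, Finset.mem_coe, not_forall]
    constructor
    · rintro ⟨y, hy, hnc⟩
      refine ⟨y, hy, fun a ha hxa => hnc ((mem_CSet w y).mpr ⟨a, ha, hxa⟩)⟩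
    · rintro ⟨y, hy, hall⟩
      refine ⟨y, hy, fun hc => ?_⟩
      obtain ⟨a, ha, hxa⟩ := (mem_CSet w y).mp hc
      exact hall a ha hxa
  rw [hsub]
  constructor
  · rintro ⟨q, _, hq⟩
    rw [eval_excl] at hq
    rcases hq with ⟨rfl, hall⟩ | ⟨y, rfl, hne, hy⟩
    · obtain ⟨y, hy⟩ := hY
      exact ⟨y, hy, fun a ha => hall a ha y hy⟩
    · exact ⟨y, y.2, hy⟩
  · rintro ⟨y, hy, hall⟩
    rcases List.eq_nil_or_concat w with rfl | ⟨u, c, rfl⟩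
    · exact ⟨none, trivial, by rw [eval_excl]; exact Or.inl ⟨rfl, by simp⟩⟩
    · exact ⟨some ⟨y, hy⟩, trivial,
        by rw [eval_excl]; exact Or.inr ⟨⟨y, hy⟩, rfl, by simp, hall⟩⟩
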